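/- If a digit string T satisfies property P (every run of T has base digit in {1,2,4,6} and run length in {2,4,6}), then LSA(T) also satisfies P. -/

import Mathlib

/-- Run-length encoding of a digit string (a list of digits). -/
def rle : List ℕ → List (ℕ × ℕ)
  | [] => []
  | a :: t =>
    match rle t with
    | [] => [(a, 1)]
    | (b, n) :: r => if a = b then (a, n + 1) :: r else (a, 1) :: (b, n) :: r

/-- `P` is a run-length representation of the digit string `S`:
multiplicities are positive, adjacent base digits are distinct, and `S` is
the concatenation of the runs. -/
def IsRLE (S : List ℕ) (P : List (ℕ × ℕ)) : Prop :=
  (∀ p ∈ P, 1 ≤ p.2) ∧ List.Chain' (fun p q => p.1 ≠ q.1) P ∧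
    S = (P.map fun p => List.replicate p.2 p.1).flatten

/-- The look-and-say-again step: each run `a^n` is read off as `n n a a`. -/
def lsa (T : List ℕ) : List ℕ := (rle T).flatMap fun p => [p.2, p.2, p.1, p.1]

/-- Property `P`: every run has base digit in `{1,2,4,6}` and length in `{2,4,6}`. -/
def propP (T : List ℕ) : Prop :=
  ∀ p ∈ rle T, p.1 ∈ ({1, 2, 4, 6} : Set ℕ) ∧ p.2 ∈ ({2, 4, 6} : Set ℕ)

/-! ### Auxiliary facts about `rle` -/

lemma rle_cons (a : ℕ) (t : List ℕ) : ∃ n r, rle (a :: t) = (a, n) :: r := by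
  show (∃ n r, (match rle t with
    | [] => [(a, 1)]
    | (b, n) :: r => if a = b then (a, n + 1) :: r else (a, 1) :: (b, n) :: r) = (a, n) :: r)
  rcases rle t with _ | ⟨⟨b, n⟩, r⟩
  · exact ⟨1, [], rfl⟩
  · by_cases h : a = b
    · subst h; exact ⟨n + 1, r, by simp⟩
    · exact ⟨1, (b, n) :: r, by simp [h]⟩

lemma rle_chain (l : List ℕ) : List.Chain' (fun p q => p.1 ≠ q.1) (rle l) := by
  induction l with
  | nil => simp [rle, List.Chain']
  | cons a t ih =>
    show List.Chain' _ (match rle t with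
      | [] => [(a, 1)]
      | (b, n) :: r => if a = b then (a, n + 1) :: r else (a, 1) :: (b, n) :: r)
    rcases h : rle t with _ | ⟨⟨b, n⟩, r⟩
    · simp [List.Chain']
    · rw [h] at ih
      by_cases hab : a = b
      · subst hab
        simp only [if_pos rfl]
        rcases r with _ | ⟨⟨c, m⟩, r'⟩
        · simp [List.Chain']
        · rw [List.Chain', List.isChain_cons_cons] at ih
          rw [show (if True then ((a, n + 1) :: (c, m) :: r') else ((a, 1) :: (a, n) :: (c, m) :: r')) = ((a, n + 1) :: (c, m) :: r') from if_pos trivial]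
          rw [List.Chain', List.isChain_cons_cons]
          exact ih
      · simp only [if_neg hab]
        rw [List.Chain', List.isChain_cons_cons]
        exact ⟨hab, ih⟩

lemma rle_replicate_append (n : ℕ) (hn : 1 ≤ n) (a : ℕ) (s : List ℕ)
    (hs : ∀ b ∈ s.head?, b ≠ a) :
    rle (List.replicate n a ++ s) = (a, n) :: rle s := by
  induction n with
  | zero => omega
  | succ n ih =>
    rcases Nat.eq_or_lt_of_le hn with h1 | h1
    · -- n = 0
      have hn0 : n = 0 := by omega
      subst hn0
      simp only [List.replicate_succ, List.replicate_zero, List.nil_append, List.cons_append]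
      show (match rle s with
        | [] => [(a, 1)]
        | (b, n) :: r => if a = b then (a, n + 1) :: r else (a, 1) :: (b, n) :: r) = (a, 1) :: rle s
      rcases hss : s with _ | ⟨c, s'⟩
      · rfl
      · obtain ⟨m, r, hr⟩ := rle_cons c s'
        have hca : c ≠ a := hs c (by simp [hss])
        have hac : ¬ a = c := fun h => hca h.symm
        rw [hr]
        simp [hac]
    · have hn1 : 1 ≤ n := by omega
      have := ih hn1
      rw [List.replicate_succ, List.cons_append]
      show (match rle (List.replicate n a ++ s) with
        | [] => [(a, 1)]
        | (b, n) :: r => if a = b then (a, n + 1) :: r else (a, 1) :: (b, n) :: r)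
        = (a, n + 1) :: rle s
      rw [this]
      simp

lemma head_flatten_runs (P : List (ℕ × ℕ)) (hP : ∀ p ∈ P, 1 ≤ p.2) (b : ℕ)
    (hb : ∀ q ∈ P.head?, b ≠ q.1) :
    ∀ x ∈ ((P.map fun p => List.replicate p.2 p.1).flatten).head?, x ≠ b := by
  rcases P with _ | ⟨⟨c, m⟩, P'⟩
  · simp
  · have hm : 1 ≤ m := hP (c, m) (by simp)
    have hbc : b ≠ c := hb (c, m) (by simp)
    intro x hx
    rcases m with _ | m
    · omega
    · simp only [List.map_cons, List.flatten_cons, List.replicate_succ,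
        List.cons_append, List.head?_cons, Option.mem_some_iff] at hx
      subst hx
      exact fun h => hbc h.symm

lemma rle_unique (S : List ℕ) (P : List (ℕ × ℕ)) (h : IsRLE S P) : rle S = P := by
  induction P generalizing S with
  | nil =>
    obtain ⟨_, _, hS⟩ := h
    simp at hS
    subst hS; rfl
  | cons p P' ih =>
    obtain ⟨hpos, hchain, hS⟩ := h
    obtain ⟨a, n⟩ := p
    have hn : 1 ≤ n := hpos (a, n) (by simp)
    have hrest : IsRLE ((P'.map fun p => List.replicate p.2 p.1).flatten) P' :=
      ⟨fun q hq => hpos q (by simp [hq]), hchain.tail, rfl⟩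
    have hhead : ∀ x ∈ ((P'.map fun p => List.replicate p.2 p.1).flatten).head?, x ≠ a := by
      apply head_flatten_runs P' (fun q hq => hpos q (by simp [hq]))
      intro q hq
      rcases P' with _ | ⟨q', P''⟩
      · simp at hq
      · simp at hq
        subst hq
        exact (List.isChain_cons_cons.mp hchain).1
    rw [hS]
    simp only [List.map_cons, List.flatten_cons]
    rw [rle_replicate_append n hn a _ hhead, ih _ hrest]

/-! ### The RLE of `lsa T`, built explicitly -/

/-- Process blocks `[n,n,a,a]`, carrying an open run `(d, c)`. -/
def lsaG : ℕ → ℕ → List (ℕ × ℕ) → List (ℕ × ℕ)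
  | d, c, [] => [(d, c)]
  | d, c, (a, n) :: rest =>
      if n = d then
        if a = d then lsaG d (c + 4) rest
        else (d, c + 2) :: lsaG a 2 rest
      else
        if a = n then (d, c) :: lsaG n 4 rest
        else (d, c) :: (n, 2) :: lsaG a 2 rest

lemma lsaG_head (l : List (ℕ × ℕ)) : ∀ d c, ∃ c' t, lsaG d c l = (d, c') :: t := by
  induction l with
  | nil => intro d c; exact ⟨c, [], rfl⟩
  | cons p rest ih =>
    intro d c
    obtain ⟨a, n⟩ := p
    rw [lsaG]
    split_ifs with h1 h2 h3
    · exact ih d (c + 4)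
    · exact ⟨c + 2, _, rfl⟩
    · exact ⟨c, _, rfl⟩
    · exact ⟨c, _, rfl⟩

lemma lsaG_flatten (l : List (ℕ × ℕ)) : ∀ d c,
    ((lsaG d c l).map fun p => List.replicate p.2 p.1).flatten
      = List.replicate c d ++ l.flatMap (fun p => [p.2, p.2, p.1, p.1]) := by
  induction l with
  | nil => intro d c; simp [lsaG]
  | cons p rest ih =>
    intro d c
    obtain ⟨a, n⟩ := p
    rw [lsaG]
    split_ifs with h1 h2 h3
    · subst h1; subst h2
      rw [ih]
      simp [List.replicate_add, List.flatMap_cons]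
    · subst h1
      simp only [List.map_cons, List.flatten_cons, ih]
      simp [List.replicate_add, List.flatMap_cons]
    · subst h3
      simp only [List.map_cons, List.flatten_cons, ih]
      simp [List.replicate_add, List.flatMap_cons]
    · simp only [List.map_cons, List.flatten_cons, ih]
      simp [List.flatMap_cons]

lemma lsaG_chain (l : List (ℕ × ℕ)) : ∀ d c,
    List.Chain' (fun p q => p.1 ≠ q.1) (lsaG d c l) := by
  induction l with
  | nil => intro d c; simp [lsaG, List.Chain']
  | cons p rest ih =>
    intro d c
    obtain ⟨a, n⟩ := p
    rw [lsaG]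
    split_ifs with h1 h2 h3
    · exact ih d (c + 4)
    · obtain ⟨c', t, ht⟩ := lsaG_head rest a 2
      rw [ht, List.Chain', List.isChain_cons_cons]
      exact ⟨fun h => h2 h.symm, ht ▸ ih a 2⟩
    · obtain ⟨c', t, ht⟩ := lsaG_head rest n 4
      rw [ht, List.Chain', List.isChain_cons_cons]
      exact ⟨fun h => h1 h.symm, ht ▸ ih n 4⟩
    · obtain ⟨c', t, ht⟩ := lsaG_head rest a 2
      rw [ht, List.Chain', List.isChain_cons_cons, List.isChain_cons_cons]
      exact ⟨fun h => h1 h.symm, fun h => h3 h.symm, ht ▸ ih a 2⟩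

lemma lsaG_pos (l : List (ℕ × ℕ)) : ∀ d c, 1 ≤ c → ∀ p ∈ lsaG d c l, 1 ≤ p.2 := by
  induction l with
  | nil => intro d c hc p hp; simp [lsaG] at hp; subst hp; exact hc
  | cons q rest ih =>
    intro d c hc p hp
    obtain ⟨a, n⟩ := q
    rw [lsaG] at hp
    split_ifs at hp with h1 h2 h3
    · exact ih d (c + 4) (by omega) p hp
    · rcases List.mem_cons.mp hp with h | h
      · subst h; simp
      · exact ih a 2 (by omega) p h
    · rcases List.mem_cons.mp hp with h | h
      · subst h; exact hc
      · exact ih n 4 (by omega) p h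
    · rcases List.mem_cons.mp hp with h | h
      · subst h; exact hc
      · rcases List.mem_cons.mp h with h' | h'
        · subst h'; simp
        · exact ih a 2 (by omega) p h'

lemma mem_N_subset_D {n : ℕ} (hn : n ∈ ({2, 4, 6} : Set ℕ)) :
    n ∈ ({1, 2, 4, 6} : Set ℕ) := by
  simp only [Set.mem_insert_iff, Set.mem_singleton_iff] at hn ⊢
  tauto

lemma lsaG_mem (l : List (ℕ × ℕ)) : ∀ d c,
    d ∈ ({1, 2, 4, 6} : Set ℕ) → (c = 2 ∨ c = 4) →
    (∀ p ∈ l, p.1 ∈ ({1, 2, 4, 6} : Set ℕ) ∧ p.2 ∈ ({2, 4, 6} : Set ℕ)) →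
    List.Chain' (fun p q => p.1 ≠ q.1) l →
    (∀ q ∈ l.head?, d ≠ q.1) →
    ∀ q ∈ lsaG d c l, q.1 ∈ ({1, 2, 4, 6} : Set ℕ) ∧ q.2 ∈ ({2, 4, 6} : Set ℕ) := by
  induction l with
  | nil =>
    intro d c hd hc _ _ _ q hq
    simp [lsaG] at hq
    subst hq
    refine ⟨hd, ?_⟩
    simp only [Set.mem_insert_iff, Set.mem_singleton_iff]
    tauto
  | cons p rest ih =>
    intro d c hd hc hl hch hfst q hq
    obtain ⟨a, n⟩ := p
    have hda : d ≠ a := hfst (a, n) (by simp)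
    have ha : a ∈ ({1, 2, 4, 6} : Set ℕ) := (hl (a, n) (by simp)).1
    have hn : n ∈ ({2, 4, 6} : Set ℕ) := (hl (a, n) (by simp)).2
    have hrest : ∀ p ∈ rest, p.1 ∈ ({1, 2, 4, 6} : Set ℕ) ∧ p.2 ∈ ({2, 4, 6} : Set ℕ) :=
      fun p hp => hl p (by simp [hp])
    have hchr : List.Chain' (fun p q => p.1 ≠ q.1) rest := hch.tail
    have hfsta : ∀ q ∈ rest.head?, a ≠ q.1 := by
      intro q hq'
      rcases rest with _ | ⟨q', rest'⟩
      · simp at hq'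
      · simp at hq'
        subst hq'
        exact (List.isChain_cons_cons.mp hch).1
    rw [lsaG] at hq
    split_ifs at hq with h1 h2 h3
    · exact absurd h2 (fun h => hda h.symm)
    · rcases List.mem_cons.mp hq with h | h
      · subst h
        refine ⟨hd, ?_⟩
        simp only [Set.mem_insert_iff, Set.mem_singleton_iff]
        omega
      · exact ih a 2 ha (Or.inl rfl) hrest hchr hfsta q h
    · subst h3
      rcases List.mem_cons.mp hq with h | h
      · subst h
        refine ⟨hd, ?_⟩
        simp only [Set.mem_insert_iff, Set.mem_singleton_iff]
        omega
      · exact ih a 4 (mem_N_subset_D hn) (Or.inr rfl) hrest hchr hfsta q h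
    · rcases List.mem_cons.mp hq with h | h
      · subst h
        refine ⟨hd, ?_⟩
        simp only [Set.mem_insert_iff, Set.mem_singleton_iff]
        omega
      · rcases List.mem_cons.mp h with h' | h'
        · subst h'
          exact ⟨mem_N_subset_D hn, by simp⟩
        · exact ih a 2 ha (Or.inl rfl) hrest hchr hfsta q h'

/-- Property `P` is preserved by the look-and-say-again step. -/
theorem propP_lsa (T : List ℕ) (hT : propP T) : propP (lsa T) := by
  rcases h : rle T with _ | ⟨⟨a, n⟩, rest⟩
  · -- rle T = [], so lsa T = []
    have : lsa T = [] := by simp [lsa, h]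
    intro p hp
    rw [this] at hp
    simp [rle] at hp
  · have ha : a ∈ ({1, 2, 4, 6} : Set ℕ) := (hT (a, n) (by rw [h]; simp)).1
    have hn : n ∈ ({2, 4, 6} : Set ℕ) := (hT (a, n) (by rw [h]; simp)).2
    have hch : List.Chain' (fun p q => p.1 ≠ q.1) ((a, n) :: rest) := h ▸ rle_chain T
    have hrest : ∀ p ∈ rest, p.1 ∈ ({1, 2, 4, 6} : Set ℕ) ∧ p.2 ∈ ({2, 4, 6} : Set ℕ) :=
      fun p hp => hT p (by rw [h]; simp [hp])
    have hchr := hch.tail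
    have hfsta : ∀ q ∈ rest.head?, a ≠ q.1 := by
      intro q hq'
      rcases rest with _ | ⟨q', rest'⟩
      · simp at hq'
      · simp at hq'
        subst hq'
        exact (List.isChain_cons_cons.mp hch).1
    have hlsa : lsa T = [n, n, a, a] ++ rest.flatMap (fun p => [p.2, p.2, p.1, p.1]) := by
      simp [lsa, h, List.flatMap_cons]
    by_cases han : a = n
    · -- output runs: lsaG a 4 rest
      have hIs : IsRLE (lsa T) (lsaG a 4 rest) := by
        refine ⟨lsaG_pos rest a 4 (by omega), lsaG_chain rest a 4, ?_⟩
        rw [lsaG_flatten, hlsa, ← han]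
        rfl
      rw [propP, rle_unique _ _ hIs]
      exact lsaG_mem rest a 4 ha (Or.inr rfl) hrest hchr hfsta
    · -- output runs: (n, 2) :: lsaG a 2 rest
      have hIs : IsRLE (lsa T) ((n, 2) :: lsaG a 2 rest) := by
        refine ⟨?_, ?_, ?_⟩
        · intro p hp
          rcases List.mem_cons.mp hp with h' | h'
          · subst h'; simp
          · exact lsaG_pos rest a 2 (by omega) p h'
        · obtain ⟨c', t, ht⟩ := lsaG_head rest a 2
          rw [ht, List.Chain', List.isChain_cons_cons]
          exact ⟨fun hh => han hh.symm, ht ▸ lsaG_chain rest a 2⟩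
        · simp only [List.map_cons, List.flatten_cons]
          rw [lsaG_flatten, hlsa]
          rfl
      rw [propP, rle_unique _ _ hIs]
      intro q hq
      rcases List.mem_cons.mp hq with h' | h'
      · subst h'
        exact ⟨mem_N_subset_D hn, by simp⟩
      · exact lsaG_mem rest a 2 ha (Or.inl rfl) hrest hchr hfsta q h'
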